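/- For every complex number $z = x + iy$ with $x > 0$, one has $\left| \frac{1 - e^{-z}}{z} \right|^2 \leq \left( \frac{1 - e^{-x}}{x} \right)^2$. -/

import Mathlib

/-- For `z = x + iy` with `x > 0`, `|(1 - e^{-z})/z|² ≤ ((1 - e^{-x})/x)²`. -/
theorem abs_one_sub_exp_div_sq_le (z : ℂ) (hx : 0 < z.re) :
    ‖(1 - Complex.exp (-z)) / z‖ ^ 2
      ≤ ((1 - Real.exp (-z.re)) / z.re) ^ 2 := by
  set x := z.re with hxdef
  have hz : z ≠ 0 := by intro h; rw [hxdef, h] at hx; simp at hx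
  have hxne : x ≠ 0 := ne_of_gt hx
  -- complex integral representation
  have hint : (∫ t in (0:ℝ)..1, Complex.exp ((-z) * t)) = (1 - Complex.exp (-z)) / z := by
    rw [integral_exp_mul_complex (neg_ne_zero.mpr hz)]
    push_cast
    rw [mul_one, mul_zero, Complex.exp_zero]
    rw [div_neg, neg_div' ]
    ring_nf
  -- real integral value
  have hreal : (∫ t in (0:ℝ)..1, Real.exp ((-x) * t)) = (1 - Real.exp (-x)) / x := by
    rw [intervalIntegral.integral_comp_mul_left (fun u => Real.exp u) (neg_ne_zero.mpr hxne)]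
    simp [integral_exp]
    rw [eq_div_iff hxne]
    field_simp
    ring
  have hnorm : ‖(1 - Complex.exp (-z)) / z‖ ≤ (1 - Real.exp (-x)) / x := by
    rw [← hint, ← hreal]
    calc ‖∫ t in (0:ℝ)..1, Complex.exp ((-z) * t)‖
        ≤ ∫ t in (0:ℝ)..1, ‖Complex.exp ((-z) * t)‖ :=
          intervalIntegral.norm_integral_le_integral_norm zero_le_one
      _ = ∫ t in (0:ℝ)..1, Real.exp ((-x) * t) := by
          apply intervalIntegral.integral_congr
          intro t ht
          simp [Complex.norm_exp, hxdef]
      _ = ∫ t in (0:ℝ)..1, Real.exp ((-x) * t) := rfl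
  have h0 : 0 ≤ ‖(1 - Complex.exp (-z)) / z‖ := norm_nonneg _
  exact pow_le_pow_left₀ h0 hnorm 2
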